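/- If X ⊆ Z are sets, then the k-algebra homomorphism A(X) → A(Z) induced by the inclusion of generators (d ↦ d, l(n,a) ↦ l(n,a), r(n,a) ↦ r(n,a) for a ∈ X) is injective; that is, A(X) embeds as a subalgebra of A(Z). -/

import Mathlib

/-- Generators of the algebra `A(X)`: `d`, and `l(n,a)`, `r(n,a)` for `n ∈ ℕ`, `a ∈ X`. -/
inductive AGen (X : Type*) where
  | d : AGen X
  | l (n : ℕ) (a : X) : AGen X
  | r (n : ℕ) (a : X) : AGen X

/-- Defining relations of `A(X)`: `l(n,a)·d = d·l(n,a) + n·l(n−1,a)`,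
`r(n,a)·d = d·r(n,a) + n·r(n−1,a)` (with `l(−1,a) = r(−1,a) = 0`, automatic here since the
coefficient `n` vanishes when `n = 0`), and `r(n,a)·l(m,b) = l(m,b)·r(n,a)`. -/
inductive ARel (k : Type*) [CommRing k] (X : Type*) :
    FreeAlgebra k (AGen X) → FreeAlgebra k (AGen X) → Prop
  | ld (n : ℕ) (a : X) :
      ARel k X (FreeAlgebra.ι k (AGen.l n a) * FreeAlgebra.ι k AGen.d)
        (FreeAlgebra.ι k AGen.d * FreeAlgebra.ι k (AGen.l n a) +
          n • FreeAlgebra.ι k (AGen.l (n - 1) a))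
  | rd (n : ℕ) (a : X) :
      ARel k X (FreeAlgebra.ι k (AGen.r n a) * FreeAlgebra.ι k AGen.d)
        (FreeAlgebra.ι k AGen.d * FreeAlgebra.ι k (AGen.r n a) +
          n • FreeAlgebra.ι k (AGen.r (n - 1) a))
  | rl (n m : ℕ) (a b : X) :
      ARel k X (FreeAlgebra.ι k (AGen.r n a) * FreeAlgebra.ι k (AGen.l m b))
        (FreeAlgebra.ι k (AGen.l m b) * FreeAlgebra.ι k (AGen.r n a))

/-- The algebra `A(X)` presented by the generators `AGen X` and relations `ARel k X`. -/
abbrev AAlg (k : Type*) [CommRing k] (X : Type*) := RingQuot (ARel k X)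

/-- The image of a generator in `A(X)`. -/
noncomputable def AAlg.gen (k : Type*) [CommRing k] {X : Type*} (g : AGen X) : AAlg k X :=
  RingQuot.mkAlgHom k (ARel k X) (FreeAlgebra.ι k g)


section
variable (k : Type*) [CommRing k] {X Z : Type*}

theorem AAlg.gen_ld (n : ℕ) (a : X) :
    AAlg.gen k (AGen.l n a) * AAlg.gen k AGen.d =
      AAlg.gen k AGen.d * AAlg.gen k (AGen.l n a) + n • AAlg.gen k (AGen.l (n - 1) a) := by
  simpa [AAlg.gen] using RingQuot.mkAlgHom_rel k (ARel.ld n a)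

theorem AAlg.gen_rd (n : ℕ) (a : X) :
    AAlg.gen k (AGen.r n a) * AAlg.gen k AGen.d =
      AAlg.gen k AGen.d * AAlg.gen k (AGen.r n a) + n • AAlg.gen k (AGen.r (n - 1) a) := by
  simpa [AAlg.gen] using RingQuot.mkAlgHom_rel k (ARel.rd n a)

theorem AAlg.gen_rl (n m : ℕ) (a b : X) :
    AAlg.gen k (AGen.r n a) * AAlg.gen k (AGen.l m b) =
      AAlg.gen k (AGen.l m b) * AAlg.gen k (AGen.r n a) := by
  simpa [AAlg.gen] using RingQuot.mkAlgHom_rel k (ARel.rl n m a b)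

def AGenMap (f : X → Z) : AGen X → AGen Z
  | AGen.d => AGen.d
  | AGen.l n a => AGen.l n (f a)
  | AGen.r n a => AGen.r n (f a)

noncomputable def AAlgMap (f : X → Z) : RingQuot (ARel k X) →ₐ[k] RingQuot (ARel k Z) :=
  RingQuot.liftAlgHom k ⟨(RingQuot.mkAlgHom k (ARel k Z)).comp
    (FreeAlgebra.lift k (fun g => FreeAlgebra.ι k (AGenMap f g))), by
      intro x y hr
      cases hr with
      | ld n a =>
          simpa only [AlgHom.coe_comp, Function.comp_apply, map_mul, map_add, map_nsmul,
            FreeAlgebra.lift_ι_apply, AGenMap, AAlg.gen] using AAlg.gen_ld k n (f a)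
      | rd n a =>
          simpa only [AlgHom.coe_comp, Function.comp_apply, map_mul, map_add, map_nsmul,
            FreeAlgebra.lift_ι_apply, AGenMap, AAlg.gen] using AAlg.gen_rd k n (f a)
      | rl n m a b =>
          simpa only [AlgHom.coe_comp, Function.comp_apply, map_mul,
            FreeAlgebra.lift_ι_apply, AGenMap, AAlg.gen] using AAlg.gen_rl k n m (f a) (f b)⟩

@[simp] theorem AAlgMap_gen (f : X → Z) (g : AGen X) :
    AAlgMap k f (AAlg.gen k g) = AAlg.gen k (AGenMap f g) := by
  simp [AAlgMap, AAlg.gen, RingQuot.liftAlgHom_mkAlgHom_apply]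

end

section
variable (k : Type*) [CommRing k] {α : Type*} {X Z : Set α}

open Classical in
noncomputable def ARetGen (h : X ⊆ Z) : AGen Z → AAlg k X
  | AGen.d => AAlg.gen k AGen.d
  | AGen.l n a => if hz : (a : α) ∈ X then AAlg.gen k (AGen.l n ⟨a, hz⟩) else 0
  | AGen.r n a => if hz : (a : α) ∈ X then AAlg.gen k (AGen.r n ⟨a, hz⟩) else 0

noncomputable def AAlgRet (h : X ⊆ Z) : AAlg k Z →ₐ[k] AAlg k X :=
  RingQuot.liftAlgHom k ⟨FreeAlgebra.lift k (ARetGen k h), by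
    intro x y hr
    cases hr with
    | ld n a =>
        simp only [map_mul, map_add, map_nsmul, FreeAlgebra.lift_ι_apply, ARetGen]
        by_cases hz : (a : α) ∈ X
        · simpa only [hz, dif_pos] using AAlg.gen_ld k n (⟨a, hz⟩ : X)
        · simp [hz]
    | rd n a =>
        simp only [map_mul, map_add, map_nsmul, FreeAlgebra.lift_ι_apply, ARetGen]
        by_cases hz : (a : α) ∈ X
        · simpa only [hz, dif_pos] using AAlg.gen_rd k n (⟨a, hz⟩ : X)
        · simp [hz]
    | rl n m a b =>
        simp only [map_mul, FreeAlgebra.lift_ι_apply, ARetGen]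
        by_cases hz : (a : α) ∈ X <;> by_cases hb : (b : α) ∈ X <;>
          simp only [hz, hb, dif_pos, dif_neg, not_false_iff, zero_mul, mul_zero]
        exact AAlg.gen_rl k n m _ _⟩

@[simp] theorem AAlgRet_gen (h : X ⊆ Z) (g : AGen Z) :
    AAlgRet k h (AAlg.gen k g) = ARetGen k h g := by
  simp [AAlgRet, AAlg.gen, RingQuot.liftAlgHom_mkAlgHom_apply]

end

theorem AAlg_inclusion_injective (k : Type*) [Field k] {α : Type*} (X Z : Set α)
    (h : X ⊆ Z) :
    ∃ φ : AAlg k X →ₐ[k] AAlg k Z,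
      φ (AAlg.gen k AGen.d) = AAlg.gen k AGen.d ∧
      (∀ (n : ℕ) (a : X), φ (AAlg.gen k (AGen.l n a)) = AAlg.gen k (AGen.l n (Set.inclusion h a))) ∧
      (∀ (n : ℕ) (a : X), φ (AAlg.gen k (AGen.r n a)) = AAlg.gen k (AGen.r n (Set.inclusion h a))) ∧
      Function.Injective φ := by
  classical
  refine ⟨AAlgMap k (Set.inclusion h), by simp [AGenMap], fun n a => by simp [AGenMap],
    fun n a => by simp [AGenMap], ?_⟩
  have key : (AAlgRet k h).comp (AAlgMap k (Set.inclusion h)) = AlgHom.id k (AAlg k X) := by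
    apply RingQuot.ringQuot_ext'
    apply FreeAlgebra.hom_ext
    funext g
    show AAlgRet k h (AAlgMap k (Set.inclusion h) (AAlg.gen k g)) = AAlg.gen k g
    cases g <;> simp [AGenMap, ARetGen, Set.inclusion]
  intro x y hxy
  have h2 := congrArg (AAlgRet k h) hxy
  calc x = (AAlgRet k h).comp (AAlgMap k (Set.inclusion h)) x := by rw [key]; rfl
    _ = (AAlgRet k h).comp (AAlgMap k (Set.inclusion h)) y := h2
    _ = y := by rw [key]; rfl
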